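/- In the regression lower-bound construction, |L(2i) − L(2i−1)| > 1/(804n); moreover, if z_i = 1 then L(2i−1) < L(2i), and if z_i = 0 then L(2i) < L(2i−1). In particular, which of the two adjacent splits 2i−1 and 2i achieves the smaller loss determines the bit z_i. -/

import Mathlib

open Finset

set_option maxHeartbeats 1000000


/-- SSE of the data points of a multiset dataset whose feature value lies in range `R`. -/
noncomputable def SSE (data : Multiset (ℕ × ℝ)) (R : Finset ℕ) : ℝ :=
  let d := data.filter fun p => p.1 ∈ R
  if d ≠ 0 then
    (d.map fun p => p.2 ^ 2).sum - ((d.map fun p => p.2).sum) ^ 2 / (Multiset.card d : ℝ)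
  else 0

/-- Mean squared loss of split `j ∈ {0,…,N}`. -/
noncomputable def L (N : ℕ) (data : Multiset (ℕ × ℝ)) (j : ℕ) : ℝ :=
  (1 / (Multiset.card data : ℝ)) *
    (SSE data (Finset.Icc 1 j) + SSE data (Finset.Icc (j + 1) N))

/-- The regression lower-bound dataset: for each `k ∈ {1,…,n}`, `B = n` copies of `(2k, z_k)`;
`T = 100n²` copies of `(2i−1, 0)`; and `T` copies of `(2i+1, 1)`. -/
def regData (n i : ℕ) (z : ℕ → ℝ) : Multiset (ℕ × ℝ) :=
  (∑ k ∈ Finset.Icc 1 n, Multiset.replicate n (2 * k, z k))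
  + Multiset.replicate (100 * n ^ 2) (2 * i - 1, (0 : ℝ))
  + Multiset.replicate (100 * n ^ 2) (2 * i + 1, (1 : ℝ))

lemma filt_repl {α : Type*} (p : α → Prop) [DecidablePred p] (k : ℕ) (a : α) :
    (Multiset.replicate k a).filter p = Multiset.replicate (if p a then k else 0) a := by
  induction k with
  | zero => simp
  | succ k ih =>
    simp only [Multiset.replicate_succ, Multiset.filter_cons, ih]
    split <;> simp [Multiset.replicate_succ]


lemma filt_sum {ι α : Type*} (s : Finset ι) (f : ι → Multiset α) (p : α → Prop) [DecidablePred p] :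
    Multiset.filter p (∑ k ∈ s, f k) = ∑ k ∈ s, Multiset.filter p (f k) := by
  classical
  induction s using Finset.induction with
  | empty => simp
  | insert _ _ h ih => simp [Finset.sum_insert h, ih]


lemma map_msum {ι α β : Type*} (s : Finset ι) (f : ι → Multiset α) (g : α → β) :
    Multiset.map g (∑ k ∈ s, f k) = ∑ k ∈ s, Multiset.map g (f k) := by
  classical
  induction s using Finset.induction with
  | empty => simp
  | insert _ _ h ih => simp [Finset.sum_insert h, ih]


lemma card_msum {ι α : Type*} (s : Finset ι) (f : ι → Multiset α) :
    Multiset.card (∑ k ∈ s, f k) = ∑ k ∈ s, Multiset.card (f k) := by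
  classical
  induction s using Finset.induction with
  | empty => simp
  | insert _ _ h ih => simp [Finset.sum_insert h, ih]


lemma msum_sum {ι α : Type*} [AddCommMonoid α] (s : Finset ι) (f : ι → Multiset α) :
    Multiset.sum (∑ k ∈ s, f k) = ∑ k ∈ s, Multiset.sum (f k) := by
  classical
  induction s using Finset.induction with
  | empty => simp
  | insert _ _ h ih => simp [Finset.sum_insert h, ih]


lemma regData_filter (n i : ℕ) (z : ℕ → ℝ) (R : Finset ℕ) (s : Finset ℕ)
    (hsub : s ⊆ Icc 1 n) (hmem : ∀ k ∈ Icc 1 n, (2*k ∈ R ↔ k ∈ s))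
    (c0 c1 : ℕ) (h0 : (if 2*i-1 ∈ R then 100*n^2 else 0) = c0)
    (h1 : (if 2*i+1 ∈ R then 100*n^2 else 0) = c1) :
    (regData n i z).filter (fun p => p.1 ∈ R) =
      (∑ k ∈ s, Multiset.replicate n (2*k, z k))
      + Multiset.replicate c0 (2*i-1, (0:ℝ)) + Multiset.replicate c1 (2*i+1, (1:ℝ)) := by
  unfold regData
  rw [Multiset.filter_add, Multiset.filter_add, filt_sum, filt_repl, filt_repl]
  simp only [h0, h1]
  congr 2
  calc ∑ k ∈ Icc 1 n, (Multiset.replicate n (2*k, z k)).filter (fun p => p.1 ∈ R)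
      = ∑ k ∈ Icc 1 n, if k ∈ s then Multiset.replicate n (2*k, z k) else 0 := by
        refine Finset.sum_congr rfl (fun k hk => ?_)
        rw [filt_repl]
        by_cases h : k ∈ s
        · simp [h, (hmem k hk).2 h]
        · have : ¬ (2*k ∈ R) := fun hr => h ((hmem k hk).1 hr)
          simp [h, this]
    _ = ∑ k ∈ s, Multiset.replicate n (2*k, z k) := by
        rw [Finset.sum_ite_mem, Finset.inter_eq_right.mpr hsub]


lemma SSE_reg (n i : ℕ) (z : ℕ → ℝ) (hz : ∀ k, z k = 0 ∨ z k = 1)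
    (R : Finset ℕ) (s : Finset ℕ) (hsub : s ⊆ Icc 1 n)
    (hmem : ∀ k ∈ Icc 1 n, (2*k ∈ R ↔ k ∈ s))
    (c0 c1 : ℕ) (h0 : (if 2*i-1 ∈ R then 100*n^2 else 0) = c0)
    (h1 : (if 2*i+1 ∈ R then 100*n^2 else 0) = c1)
    (hpos : 0 < n * s.card + c0 + c1) :
    SSE (regData n i z) R =
      ((n:ℝ) * ∑ k ∈ s, z k + c1) -
      ((n:ℝ) * ∑ k ∈ s, z k + c1)^2 / ((n:ℝ) * s.card + c0 + c1) := by
  have hfil := regData_filter n i z R s hsub hmem c0 c1 h0 h1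
  have hcard : Multiset.card ((regData n i z).filter (fun p => p.1 ∈ R)) = n * s.card + c0 + c1 := by
    rw [hfil]
    simp [card_msum, Multiset.card_replicate, Finset.sum_const, smul_eq_mul, mul_comm]
  have hne : (regData n i z).filter (fun p => p.1 ∈ R) ≠ 0 := by
    intro h
    rw [h] at hcard
    simp at hcard
    omega
  have hsumy : ((((regData n i z).filter (fun p => p.1 ∈ R))).map (fun p => p.2)).sum
      = (n:ℝ) * ∑ k ∈ s, z k + c1 := by
    rw [hfil]
    simp [Multiset.map_add, map_msum, Multiset.map_replicate, msum_sum, Multiset.sum_replicate,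
      nsmul_eq_mul, Finset.mul_sum]
  have hzz : ∀ k, (z k)^2 = z k := fun k => by rcases hz k with h | h <;> simp [h]
  have hsumy2 : ((((regData n i z).filter (fun p => p.1 ∈ R))).map (fun p => p.2^2)).sum
      = (n:ℝ) * ∑ k ∈ s, z k + c1 := by
    rw [hfil]
    simp [Multiset.map_add, map_msum, Multiset.map_replicate, msum_sum, Multiset.sum_replicate,
      nsmul_eq_mul, Finset.mul_sum, hzz]
  simp only [SSE]
  rw [if_pos hne, hsumy, hsumy2, hcard]
  push_cast
  ring


noncomputable def regE (v w a b c : ℝ) : ℝ :=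
  (v*(a+c) - (v*(a+c))^2/(v*(w+1)+100*v^2)
    + ((v*b+100*v^2) - (v*b+100*v^2)^2/(v*(v-w-1)+100*v^2)))
  - (v*a - (v*a)^2/(v*w+100*v^2)
    + ((v*(c+b)+100*v^2) - (v*(c+b)+100*v^2)^2/(v*(v-w)+100*v^2)))


lemma reg_arith (v w a b c : ℝ) (hv : 1 ≤ v) (hw : 0 ≤ w) (hwv : w + 1 ≤ v)
    (ha0 : 0 ≤ a) (hav : a ≤ v) (hb0 : 0 ≤ b) (hbv : b ≤ v) :
    (c = 0 → regE v w a b c < -(v/4)) ∧ (c = 1 → v/4 < regE v w a b c) := by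
  have hv0 : (0:ℝ) < v := by linarith
  have hv2 : (0:ℝ) < v^2 := by positivity
  have hvv : v*v = v^2 := by ring
  set A1 : ℝ := v*w+100*v^2 with hA1d
  set A2 : ℝ := v*(w+1)+100*v^2 with hA2d
  set D1 : ℝ := v*(v-w)+100*v^2 with hD1d
  set D2 : ℝ := v*(v-w-1)+100*v^2 with hD2d
  set u : ℝ := v*b+100*v^2 with hud
  clear_value A1 A2 D1 D2 u
  have h100 : (0:ℝ) < 100*v^2 := by linarith
  have hwv' : v*w ≤ v^2 := by
    have := mul_le_mul_of_nonneg_left (show w ≤ v by linarith) hv0.le; linarith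
  have hbv' : v*b ≤ v^2 := by
    have := mul_le_mul_of_nonneg_left hbv hv0.le; linarith
  have hvw0 : 0 ≤ v*w := mul_nonneg hv0.le hw
  have hvb0 : 0 ≤ v*b := mul_nonneg hv0.le hb0
  have hvwm : 0 ≤ v*(v-w-1) := mul_nonneg hv0.le (by linarith)
  have hvwm2 : v*(v-w-1) ≤ v^2 := by
    have := mul_le_mul_of_nonneg_left (show v-w-1 ≤ v by linarith) hv0.le; linarith
  have hvw1 : 0 ≤ v*(v-w) := mul_nonneg hv0.le (by linarith)
  have hvw2 : v*(v-w) ≤ v^2 := by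
    have := mul_le_mul_of_nonneg_left (show v-w ≤ v by linarith) hv0.le; linarith
  have hA1l : 100*v^2 ≤ A1 := by rw [hA1d]; linarith
  have hA1u : A1 ≤ 101*v^2 := by rw [hA1d]; linarith
  have hA2l : 100*v^2 ≤ A2 := by rw [hA2d]; nlinarith
  have hA2u : A2 ≤ 101*v^2 := by rw [hA2d]; nlinarith
  have hD1l : 100*v^2 ≤ D1 := by rw [hD1d]; linarith
  have hD1u : D1 ≤ 101*v^2 := by rw [hD1d]; linarith
  have hD2l : 100*v^2 ≤ D2 := by rw [hD2d]; linarith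
  have hD2u : D2 ≤ 101*v^2 := by rw [hD2d]; linarith
  have hA1p : 0 < A1 := lt_of_lt_of_le h100 hA1l
  have hA2p : 0 < A2 := lt_of_lt_of_le h100 hA2l
  have hD1p : 0 < D1 := lt_of_lt_of_le h100 hD1l
  have hD2p : 0 < D2 := lt_of_lt_of_le h100 hD2l
  have hul : 100*v^2 ≤ u := by rw [hud]; linarith
  have huu : u ≤ 101*v^2 := by rw [hud]; linarith
  have hup : 0 < u := lt_of_lt_of_le h100 hul
  have hA1A2 : 10000*v^4 ≤ A1*A2 := by
    have := mul_le_mul hA1l hA2l h100.le hA1p.le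
    nlinarith
  have hD1D2 : D1*D2 ≤ 10201*v^4 := by
    have := mul_le_mul hD1u hD2u hD2p.le (by positivity : (0:ℝ) ≤ 101*v^2)
    nlinarith
  constructor
  · intro hc; subst hc
    have key : regE v w a b 0 = v^3*a^2/(A1*A2) - u^2*v/(D1*D2) := by
      unfold regE
      rw [← hA1d, ← hA2d, ← hD1d, ← hD2d]
      have := hA1p.ne'; have := hA2p.ne'; have := hD1p.ne'; have := hD2p.ne'
      field_simp
      subst hA1d; subst hA2d; subst hD1d; subst hD2d; subst hud
      ring
    have b1 : v^3*a^2/(A1*A2) ≤ v/10000 := by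
      rw [div_le_div_iff₀ (mul_pos hA1p hA2p) (by norm_num)]
      have h1 : a^2 ≤ v^2 := by nlinarith
      have h3 : v^3*a^2 ≤ v^5 := by nlinarith [pow_pos hv0 3]
      have h4 : v*(10000*v^4) ≤ v*(A1*A2) := mul_le_mul_of_nonneg_left hA1A2 hv0.le
      nlinarith
    have b2 : (10000/10201)*v ≤ u^2*v/(D1*D2) := by
      rw [le_div_iff₀ (mul_pos hD1p hD2p)]
      have h3 : 10000*v^4 ≤ u^2 := by nlinarith
      have h4 : (10000/10201)*v*(D1*D2) ≤ (10000/10201)*v*(10201*v^4) :=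
        mul_le_mul_of_nonneg_left hD1D2 (by positivity)
      have h5 : (10000*v^4)*v ≤ u^2*v := mul_le_mul_of_nonneg_right h3 hv0.le
      nlinarith
    rw [key]; linarith
  · intro hc; subst hc
    have key : regE v w a b 1 = v^2*(a^2*v - (2*a+1)*A1)/(A1*A2)
        + v*(2*u*D2 + v*D2 - u^2)/(D1*D2) := by
      unfold regE
      rw [← hA1d, ← hA2d, ← hD1d, ← hD2d]
      have := hA1p.ne'; have := hA2p.ne'; have := hD1p.ne'; have := hD2p.ne'
      field_simp
      subst hA1d; subst hA2d; subst hD1d; subst hD2d; subst hud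
      ring
    have t1 : -(303/10000)*v ≤ v^2*(a^2*v - (2*a+1)*A1)/(A1*A2) := by
      rw [le_div_iff₀ (mul_pos hA1p hA2p)]
      have h6 : (2*a+1)*A1 ≤ (3*v)*(101*v^2) :=
        mul_le_mul (by linarith) hA1u hA1p.le (by positivity)
      have h7 : v^2*((2*a+1)*A1) ≤ v^2*((3*v)*(101*v^2)) :=
        mul_le_mul_of_nonneg_left h6 (sq_nonneg v)
      have h8 : -(303/10000)*v*(A1*A2) ≤ -(303/10000)*v*(10000*v^4) :=
        mul_le_mul_of_nonpos_left hA1A2 (by linarith)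
      have h9 : 0 ≤ v^2*(a^2*v) := by positivity
      nlinarith
    have t2 : (9900/10201)*v ≤ v*(2*u*D2 + v*D2 - u^2)/(D1*D2) := by
      rw [le_div_iff₀ (mul_pos hD1p hD2p)]
      have hZ : 9900*v^4 ≤ u*(2*D2 - u) := by
        have := mul_le_mul hul (by linarith : 99*v^2 ≤ 2*D2 - u) (by positivity) hup.le
        nlinarith
      have h4 : (9900/10201)*v*(D1*D2) ≤ (9900/10201)*v*(10201*v^4) :=
        mul_le_mul_of_nonneg_left hD1D2 (by positivity)
      have h5 : v*(9900*v^4) ≤ v*(u*(2*D2-u)) := mul_le_mul_of_nonneg_left hZ hv0.le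
      have h6 : 0 ≤ v*(v*D2) := mul_nonneg hv0.le (mul_nonneg hv0.le hD2p.le)
      nlinarith
    rw [key]; linarith

/-- In the regression lower-bound construction, the losses of the two adjacent splits `2i−1`
and `2i` differ by more than `1/(804n)`; moreover if `z_i = 1` then `2i−1` is strictly better,
and if `z_i = 0` then `2i` is strictly better, so the better split reveals the bit `z_i`. -/
theorem reg_gap_reveals_bit (n : ℕ) (hn : 1 ≤ n) (i : ℕ) (hi : i ∈ Finset.Icc 1 n)
    (z : ℕ → ℝ) (hz : ∀ k, z k = 0 ∨ z k = 1) :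
    1 / (804 * (n : ℝ)) <
      |L (2 * n + 1) (regData n i z) (2 * i) - L (2 * n + 1) (regData n i z) (2 * i - 1)| ∧
    (z i = 1 →
      L (2 * n + 1) (regData n i z) (2 * i - 1) < L (2 * n + 1) (regData n i z) (2 * i)) ∧
    (z i = 0 →
      L (2 * n + 1) (regData n i z) (2 * i) < L (2 * n + 1) (regData n i z) (2 * i - 1)) := by
  simp only [Finset.mem_Icc] at hi
  obtain ⟨hi1, hi2⟩ := hi
  obtain ⟨j, rfl⟩ : ∃ j, i = j + 1 := ⟨i - 1, by omega⟩
  have hn2 : 0 < n^2 := pow_pos hn 2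
  have hv0 : (0:ℝ) < (n:ℝ) := by exact_mod_cast hn
  have hv1 : (1:ℝ) ≤ (n:ℝ) := by exact_mod_cast hn
  have hwv : (j:ℝ) + 1 ≤ (n:ℝ) := by exact_mod_cast hi2
  -- bounds on sums
  have hone : ∀ (s : Finset ℕ), (0:ℝ) ≤ ∑ k ∈ s, z k :=
    fun s => Finset.sum_nonneg (fun k _ => by rcases hz k with h|h <;> simp [h])
  have hcardle : ∀ (s : Finset ℕ), (∑ k ∈ s, z k) ≤ (s.card : ℝ) := by
    intro s
    calc ∑ k ∈ s, z k ≤ ∑ k ∈ s, (1:ℝ) :=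
          Finset.sum_le_sum (fun k _ => by rcases hz k with h|h <;> simp [h])
      _ = (s.card : ℝ) := by simp
  have hA0 : (0:ℝ) ≤ ∑ k ∈ Icc 1 j, z k := hone _
  have hAv : (∑ k ∈ Icc 1 j, z k) ≤ (n:ℝ) := by
    refine le_trans (hcardle _) ?_
    rw [Nat.card_Icc]
    exact_mod_cast (by omega : j + 1 - 1 ≤ n)
  have hB0 : (0:ℝ) ≤ ∑ k ∈ Icc (j+2) n, z k := hone _
  have hBv : (∑ k ∈ Icc (j+2) n, z k) ≤ (n:ℝ) := by
    refine le_trans (hcardle _) ?_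
    rw [Nat.card_Icc]
    exact_mod_cast (by omega : n + 1 - (j+2) ≤ n)
  -- card computations
  have hc1 : (((Icc 1 j).card : ℕ) : ℝ) = (j:ℝ) := by rw [Nat.card_Icc]; simp
  have hc3 : (((Icc 1 (j+1)).card : ℕ) : ℝ) = (j:ℝ) + 1 := by
    rw [Nat.card_Icc]; push_cast [Nat.add_sub_cancel]; ring
  have hc2 : (((Icc (j+1) n).card : ℕ) : ℝ) = (n:ℝ) - (j:ℝ) := by
    rw [Nat.card_Icc, Nat.cast_sub (by omega)]; push_cast; ring
  have hc4 : (((Icc (j+2) n).card : ℕ) : ℝ) = (n:ℝ) - (j:ℝ) - 1 := by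
    rw [Nat.card_Icc, Nat.cast_sub (by omega)]; push_cast; ring
  -- sum splitting
  have hsum3 : ∑ k ∈ Icc 1 (j+1), z k = (∑ k ∈ Icc 1 j, z k) + z (j+1) :=
    Finset.sum_Icc_succ_top (by omega) z
  have hsum2 : ∑ k ∈ Icc (j+1) n, z k = z (j+1) + ∑ k ∈ Icc (j+2) n, z k := by
    have h1 : insert (j+1) (Icc (j+2) n) = Icc (j+1) n := by
      rw [show j+2 = j+1+1 by omega, Finset.Icc_add_one_left_eq_Ioc]
      exact Finset.Ioc_insert_left (by omega)
    rw [← h1, Finset.sum_insert (fun h => by simp only [Finset.mem_Icc] at h; omega)]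
  -- total count
  have hm : ((Multiset.card (regData n (j+1) z)) : ℝ) = 201*(n:ℝ)^2 := by
    unfold regData
    simp [card_msum, Multiset.card_replicate, Finset.sum_const, Nat.card_Icc, smul_eq_mul]
    ring
  -- four SSE computations
  have e1 : SSE (regData n (j+1) z) (Icc 1 (2*(j+1)-1)) =
      (n:ℝ)*(∑ k ∈ Icc 1 j, z k)
        - ((n:ℝ)*(∑ k ∈ Icc 1 j, z k))^2/((n:ℝ)*(j:ℝ)+100*(n:ℝ)^2) := by
    rw [SSE_reg n (j+1) z hz _ (Icc 1 j)
      (Finset.Icc_subset_Icc_right (by omega))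
      (fun k hk => by simp only [Finset.mem_Icc] at *; omega)
      (100*n^2) 0
      (if_pos (by simp only [Finset.mem_Icc]; omega))
      (if_neg (by simp only [Finset.mem_Icc]; omega))
      (by rw [Nat.card_Icc]; omega), hc1]
    push_cast
    ring
  have e3 : SSE (regData n (j+1) z) (Icc 1 (2*(j+1))) =
      (n:ℝ)*((∑ k ∈ Icc 1 j, z k) + z (j+1))
        - ((n:ℝ)*((∑ k ∈ Icc 1 j, z k) + z (j+1)))^2/((n:ℝ)*((j:ℝ)+1)+100*(n:ℝ)^2) := by
    rw [SSE_reg n (j+1) z hz _ (Icc 1 (j+1))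
      (Finset.Icc_subset_Icc_right (by omega))
      (fun k hk => by simp only [Finset.mem_Icc] at *; omega)
      (100*n^2) 0
      (if_pos (by simp only [Finset.mem_Icc]; omega))
      (if_neg (by simp only [Finset.mem_Icc]; omega))
      (by rw [Nat.card_Icc]; omega), hc3, hsum3]
    push_cast
    ring
  have e2 : SSE (regData n (j+1) z) (Icc (2*(j+1)-1+1) (2*n+1)) =
      ((n:ℝ)*(z (j+1) + ∑ k ∈ Icc (j+2) n, z k) + 100*(n:ℝ)^2)
        - ((n:ℝ)*(z (j+1) + ∑ k ∈ Icc (j+2) n, z k) + 100*(n:ℝ)^2)^2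
            /((n:ℝ)*((n:ℝ)-(j:ℝ))+100*(n:ℝ)^2) := by
    rw [SSE_reg n (j+1) z hz _ (Icc (j+1) n)
      (Finset.Icc_subset_Icc_left (by omega))
      (fun k hk => by simp only [Finset.mem_Icc] at *; omega)
      0 (100*n^2)
      (if_neg (by simp only [Finset.mem_Icc]; omega))
      (if_pos (by simp only [Finset.mem_Icc]; omega))
      (by rw [Nat.card_Icc]; omega), hc2, hsum2]
    push_cast
    ring
  have e4 : SSE (regData n (j+1) z) (Icc (2*(j+1)+1) (2*n+1)) =
      ((n:ℝ)*(∑ k ∈ Icc (j+2) n, z k) + 100*(n:ℝ)^2)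
        - ((n:ℝ)*(∑ k ∈ Icc (j+2) n, z k) + 100*(n:ℝ)^2)^2
            /((n:ℝ)*((n:ℝ)-(j:ℝ)-1)+100*(n:ℝ)^2) := by
    rw [SSE_reg n (j+1) z hz _ (Icc (j+2) n)
      (Finset.Icc_subset_Icc_left (by omega))
      (fun k hk => by simp only [Finset.mem_Icc] at *; omega)
      0 (100*n^2)
      (if_neg (by simp only [Finset.mem_Icc]; omega))
      (if_pos (by simp only [Finset.mem_Icc]; omega))
      (by rw [Nat.card_Icc]; omega), hc4]
    push_cast
    ring
  -- difference of losses
  have hdiff : L (2*n+1) (regData n (j+1) z) (2*(j+1)) - L (2*n+1) (regData n (j+1) z) (2*(j+1)-1)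
      = 1/(201*(n:ℝ)^2) * regE (n:ℝ) (j:ℝ) (∑ k ∈ Icc 1 j, z k) (∑ k ∈ Icc (j+2) n, z k) (z (j+1)) := by
    unfold L regE
    rw [hm, e1, e2, e3, e4]
    ring
  obtain ⟨hc0, hcc1⟩ := reg_arith (n:ℝ) (j:ℝ) (∑ k ∈ Icc 1 j, z k) (∑ k ∈ Icc (j+2) n, z k)
    (z (j+1)) hv1 (Nat.cast_nonneg j) hwv hA0 hAv hB0 hBv
  have h201 : (0:ℝ) < 1/(201*(n:ℝ)^2) := by positivity
  have hq : 1/(201*(n:ℝ)^2) * ((n:ℝ)/4) = 1/(804*(n:ℝ)) := by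
    field_simp
    ring
  refine ⟨?_, ?_, ?_⟩
  · rcases hz (j+1) with h|h
    · have hE := hc0 h
      have hlt : L (2*n+1) (regData n (j+1) z) (2*(j+1)) - L (2*n+1) (regData n (j+1) z) (2*(j+1)-1)
          < -(1/(804*(n:ℝ))) := by
        rw [hdiff, ← hq]
        have := mul_lt_mul_of_pos_left hE h201
        rw [mul_neg] at this
        linarith
      calc 1/(804*(n:ℝ)) < -(L (2*n+1) (regData n (j+1) z) (2*(j+1)) - L (2*n+1) (regData n (j+1) z) (2*(j+1)-1)) := by
            linarith
        _ ≤ |L (2*n+1) (regData n (j+1) z) (2*(j+1)) - L (2*n+1) (regData n (j+1) z) (2*(j+1)-1)| :=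
            neg_le_abs _
    · have hE := hcc1 h
      have hlt : 1/(804*(n:ℝ)) < L (2*n+1) (regData n (j+1) z) (2*(j+1)) - L (2*n+1) (regData n (j+1) z) (2*(j+1)-1) := by
        rw [hdiff, ← hq]
        exact mul_lt_mul_of_pos_left hE h201
      exact lt_of_lt_of_le hlt (le_abs_self _)
  · intro h1
    have hE := hcc1 h1
    have : 1/(804*(n:ℝ)) < L (2*n+1) (regData n (j+1) z) (2*(j+1)) - L (2*n+1) (regData n (j+1) z) (2*(j+1)-1) := by
      rw [hdiff, ← hq]
      exact mul_lt_mul_of_pos_left hE h201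
    have h804 : (0:ℝ) < 1/(804*(n:ℝ)) := by positivity
    linarith
  · intro h0
    have hE := hc0 h0
    have : L (2*n+1) (regData n (j+1) z) (2*(j+1)) - L (2*n+1) (regData n (j+1) z) (2*(j+1)-1)
        < -(1/(804*(n:ℝ))) := by
      rw [hdiff, ← hq]
      have := mul_lt_mul_of_pos_left hE h201
      rw [mul_neg] at this
      linarith
    have h804 : (0:ℝ) < 1/(804*(n:ℝ)) := by positivity
    linarith
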